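/- Let V be a finite-dimensional complex vector space with linear maps d, δ : V → V satisfying d² = 0, δ² = 0, set □ = dδ + δd, and let V₀ be the generalized eigenspace of □ for eigenvalue 0. Then the inclusion ker δ ∩ V₀ ↪ ker δ induces a linear isomorphism (ker δ ∩ V₀)/(range δ ∩ V₀) ≅ ker δ / range δ. -/

import Mathlib

open LinearMap Filter

lemma key_decomp (V : Type*) [AddCommGroup V] [Module ℂ V] [FiniteDimensional ℂ V]
    (d δ : Module.End ℂ V) (hd : d ∘ₗ d = 0) (hδ : δ ∘ₗ δ = 0) (x : V) (hx : δ x = 0) :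
    ∃ k, δ k = 0 ∧ k ∈ (⨆ n : ℕ, LinearMap.ker ((d ∘ₗ δ + δ ∘ₗ d) ^ n)) ∧
      x - k ∈ LinearMap.range δ := by
  set L : Module.End ℂ V := d ∘ₗ δ + δ ∘ₗ d with hL
  have hδ2 : ∀ y, δ (δ y) = 0 := fun y => LinearMap.ext_iff.mp hδ y
  have hd2 : ∀ y, d (d y) = 0 := fun y => LinearMap.ext_iff.mp hd y
  have hCδ : Commute δ L := by
    ext y
    simp [hL, Module.End.mul_apply, LinearMap.comp_apply, map_add, hδ2, hd2]
  have hCd : Commute d L := by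
    ext y
    simp [hL, Module.End.mul_apply, LinearMap.comp_apply, map_add, hδ2, hd2]
  obtain ⟨N, hN⟩ := eventually_atTop.mp (L.eventually_isCompl_ker_pow_range_pow.and
    L.eventually_iInf_range_pow_eq)
  set M := N + 1 with hM
  obtain ⟨h1, h2⟩ := hN M (Nat.le_succ N)
  obtain ⟨-, h2'⟩ := hN (M + 1) (by omega)
  have hrange : LinearMap.range (L ^ (M + 1)) = LinearMap.range (L ^ M) := by
    rw [← h2, ← h2']
  have hCδp : ∀ n : ℕ, ∀ y, δ ((L ^ n) y) = (L ^ n) (δ y) := fun n y => by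
    simpa [Module.End.mul_apply] using LinearMap.ext_iff.mp (hCδ.pow_right n) y
  have hCdp : ∀ n : ℕ, ∀ y, d ((L ^ n) y) = (L ^ n) (d y) := fun n y => by
    simpa [Module.End.mul_apply] using LinearMap.ext_iff.mp (hCd.pow_right n) y
  set R := LinearMap.range (L ^ M) with hR
  have hRL : ∀ y ∈ R, L y ∈ R := by
    rintro - ⟨z, rfl⟩
    refine ⟨L z, ?_⟩
    simpa [Module.End.mul_apply] using
      LinearMap.ext_iff.mp ((Commute.refl L).pow_right M).symm.eq z
  have hRδ : ∀ y ∈ R, δ y ∈ R := by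
    rintro - ⟨z, rfl⟩
    exact ⟨δ z, (hCδp M z).symm⟩
  have hRd : ∀ y ∈ R, d y ∈ R := by
    rintro - ⟨z, rfl⟩
    exact ⟨d z, (hCdp M z).symm⟩
  set B : Module.End ℂ R := L.restrict hRL with hB
  have hBinj : Function.Injective B := by
    rw [← LinearMap.ker_eq_bot, Submodule.eq_bot_iff]
    rintro ⟨y, hy⟩ hy0
    have hy0' : L y = 0 := congrArg Subtype.val hy0
    have hyk : y ∈ LinearMap.ker (L ^ M) := by
      have h1y : (L ^ 1) y = 0 := by simpa using hy0'
      exact Module.End.pow_map_zero_of_le (by omega : 1 ≤ M) h1y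
    have hbot := h1.disjoint.le_bot (Submodule.mem_inf.mpr ⟨hyk, hy⟩)
    exact Subtype.ext (by simpa using hbot)
  have hBsurj : Function.Surjective B := by
    rintro ⟨y, hy⟩
    rw [← hrange] at hy
    obtain ⟨z, rfl⟩ := hy
    refine ⟨⟨(L ^ M) z, ⟨z, rfl⟩⟩, ?_⟩
    apply Subtype.ext
    show L ((L ^ M) z) = (L ^ (M + 1)) z
    simp [pow_succ', Module.End.mul_apply]
  set e : R ≃ₗ[ℂ] R := LinearEquiv.ofBijective B ⟨hBinj, hBsurj⟩ with he
  set δ' : Module.End ℂ R := δ.restrict hRδ with hδ'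
  set d' : Module.End ℂ R := d.restrict hRd with hd'
  have hee : ∀ z : R, e z = B z := fun z => rfl
  have hδ'B : ∀ y : R, δ' (B y) = B (δ' y) := by
    intro y
    apply Subtype.ext
    show δ (L y) = L (δ y)
    simpa [Module.End.mul_apply] using LinearMap.ext_iff.mp hCδ.eq (y : V)
  have hδ'symm : ∀ y : R, δ' (e.symm y) = e.symm (δ' y) := by
    intro y
    apply e.injective
    rw [e.apply_symm_apply, hee, ← hδ'B, ← hee, e.apply_symm_apply]
  -- decompose x
  have hsup : x ∈ LinearMap.ker (L ^ M) ⊔ LinearMap.range (L ^ M) := by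
    rw [h1.codisjoint.eq_top]; trivial
  obtain ⟨k, hk, r, hr, hkr⟩ := Submodule.mem_sup.mp hsup
  have hδk_mem : δ k ∈ LinearMap.ker (L ^ M) := by
    rw [LinearMap.mem_ker] at hk ⊢
    rw [← hCδp, hk, map_zero]
  have hδkr : δ k + δ r = 0 := by rw [← map_add, hkr, hx]
  have hδk : δ k = 0 := by
    have hmem : δ k ∈ LinearMap.ker (L ^ M) ⊓ R := by
      refine Submodule.mem_inf.mpr ⟨hδk_mem, ?_⟩
      rw [show δ k = -(δ r) from by rw [neg_eq_of_add_eq_zero_left hδkr]]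
      exact R.neg_mem (hRδ r hr)
    simpa using h1.disjoint.le_bot hmem
  have hδr : δ r = 0 := by
    have := hδkr; rw [hδk, zero_add] at this; exact this
  -- r ∈ range δ
  have hr_range : r ∈ LinearMap.range δ := by
    set r' : R := ⟨r, hr⟩ with hr'
    have hBr : B r' = δ' (d' r') := by
      apply Subtype.ext
      show L r = δ (d r)
      simp [hL, LinearMap.comp_apply, hδr]
    have : r' = δ' (e.symm (d' r')) := by
      rw [hδ'symm, ← hBr, ← hee, e.symm_apply_apply]
    refine ⟨(e.symm (d' r')).1, ?_⟩
    have := congrArg Subtype.val this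
    exact this.symm
  refine ⟨k, hδk, ?_, ?_⟩
  · exact Submodule.mem_iSup_of_mem M hk
  · have : x - k = r := by rw [← hkr]; abel
    rw [this]; exact hr_range


/-- the inclusion `ker δ ∩ V₀ ↪ ker δ` induces an isomorphism
`(ker δ ∩ V₀)/(range δ ∩ V₀) ≅ ker δ / range δ`; we express this by saying that the
map `q : ker δ ∩ V₀ → V / range δ` has kernel `range δ ∩ V₀` (pulled back) and image
exactly the image of `ker δ` in `V / range δ`. Here `□ = dδ + δd` and `V₀` is its
generalized 0-eigenspace. -/
theorem stmt8 (V : Type*) [AddCommGroup V] [Module ℂ V] [FiniteDimensional ℂ V]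
    (d δ : Module.End ℂ V) (hd : d ∘ₗ d = 0) (hδ : δ ∘ₗ δ = 0) :
    LinearMap.ker ((LinearMap.range δ).mkQ ∘ₗ
        (LinearMap.ker δ ⊓ ⨆ n : ℕ, LinearMap.ker ((d ∘ₗ δ + δ ∘ₗ d) ^ n)).subtype) =
      Submodule.comap
        (LinearMap.ker δ ⊓ ⨆ n : ℕ, LinearMap.ker ((d ∘ₗ δ + δ ∘ₗ d) ^ n)).subtype
        (LinearMap.range δ ⊓ ⨆ n : ℕ, LinearMap.ker ((d ∘ₗ δ + δ ∘ₗ d) ^ n)) ∧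
    LinearMap.range ((LinearMap.range δ).mkQ ∘ₗ
        (LinearMap.ker δ ⊓ ⨆ n : ℕ, LinearMap.ker ((d ∘ₗ δ + δ ∘ₗ d) ^ n)).subtype) =
      Submodule.map (LinearMap.range δ).mkQ (LinearMap.ker δ) := by
  set V₀ := ⨆ n : ℕ, LinearMap.ker ((d ∘ₗ δ + δ ∘ₗ d) ^ n) with hV₀
  constructor
  · ext x
    obtain ⟨x, hx1, hx2⟩ := x
    simp only [LinearMap.mem_ker, LinearMap.comp_apply, Submodule.subtype_apply,
      Submodule.mkQ_apply, Submodule.Quotient.mk_eq_zero, Submodule.mem_comap,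
      Submodule.mem_inf]
    exact ⟨fun h => ⟨h, hx2⟩, fun h => h.1⟩
  · apply le_antisymm
    · rintro y ⟨x, rfl⟩
      exact Submodule.mem_map_of_mem x.2.1
    · rintro y ⟨x, hx, rfl⟩
      obtain ⟨k, hk0, hkV, hxk⟩ := key_decomp V d δ hd hδ x hx
      refine ⟨⟨k, ⟨hk0, hkV⟩⟩, ?_⟩
      simp only [LinearMap.comp_apply, Submodule.subtype_apply, Submodule.mkQ_apply]
      exact ((Submodule.Quotient.eq _).mpr hxk).symm
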